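/- With the vector fields η^m and ξ^ℓ on Ω = ℝⁿ × U as defined in the context, assume in addition that the functions f_j are real-analytic on U, that at a given point a ∈ U one has f_j(a) = 0 and (df_j)_a = 0 for all j = k+1, …, n, and that the germs at a of f_{k+1}, …, f_n are linearly independent over ℝ (i.e., no nontrivial real linear combination of the f_j vanishes identically on some neighbourhood of a). Then for every x ∈ ℝⁿ, the values at the point (x, a) of the fields η¹, …, η^k, ξ¹, …, ξ^k together with the values at (x, a) of all iterated brackets [η^{m₁}, [η^{m₂}, …, [η^{m_s}, ξ^ℓ] … ]] (s ≥ 1, m₁, …, m_s, ℓ ∈ {1, …, k}) span all of ℝⁿ × ℝᵏ. -/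

import Mathlib

open Filter Topology

/-- The Lie bracket of two vector fields `X Y : E → E`:
`[X,Y](p) = (DY)_p(X(p)) − (DX)_p(Y(p))`. -/
noncomputable def VBracket {E : Type*} [NormedAddCommGroup E] [NormedSpace ℝ E]
    (X Y : E → E) : E → E :=
  fun p => fderiv ℝ Y p (X p) - fderiv ℝ X p (Y p)

/-- The vector field `ξ^ℓ(x,t) = (−e_ℓ + Σ_{j ≥ k} (∂f_j/∂t_ℓ)(t) · e_j, 0)`
on `ℝⁿ × ℝᵏ` (indices `j = k+1, …, n` in 1-based notation correspond to the
`j : Fin n` with `k ≤ j`). -/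
noncomputable def xiField (n k : ℕ) (hkn : k ≤ n) (f : Fin n → (Fin k → ℝ) → ℝ) (ℓ : Fin k) :
    ((Fin n → ℝ) × (Fin k → ℝ)) → ((Fin n → ℝ) × (Fin k → ℝ)) :=
  fun p =>
    (-(Pi.single (Fin.castLE hkn ℓ) 1) +
      ∑ j ∈ Finset.univ.filter (fun j : Fin n => k ≤ (j : ℕ)),
        (fderiv ℝ (f j) p.2 (Pi.single ℓ 1)) • (Pi.single j (1 : ℝ) : Fin n → ℝ),
     0)

/-- The constant vector field `η^m(x,t) = (0, e_m)` on `ℝⁿ × ℝᵏ`. -/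
noncomputable def etaField (n k : ℕ) (m : Fin k) :
    ((Fin n → ℝ) × (Fin k → ℝ)) → ((Fin n → ℝ) × (Fin k → ℝ)) :=
  fun _ => (0, Pi.single m 1)

/-- The iterated bracket `[η^{m₁}, [η^{m₂}, …, [η^{m_s}, ξ^ℓ] … ]]`
for `L = [m₁, …, m_s]`. -/
noncomputable def iterBracket (n k : ℕ) (hkn : k ≤ n) (f : Fin n → (Fin k → ℝ) → ℝ)
    (L : List (Fin k)) (ℓ : Fin k) :
    ((Fin n → ℝ) × (Fin k → ℝ)) → ((Fin n → ℝ) × (Fin k → ℝ)) :=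
  L.foldr (fun m acc => VBracket (etaField n k m) acc) (xiField n k hkn f ℓ)


/-- Iterated directional derivative along a list of coordinate directions. -/
noncomputable def Dchain {k : ℕ} {E : Type*} [NormedAddCommGroup E] [NormedSpace ℝ E]
    (M : List (Fin k)) (H : (Fin k → ℝ) → E) : (Fin k → ℝ) → E :=
  M.foldr (fun m G => fun t => fderiv ℝ G t (Pi.single m 1)) H

variable {k : ℕ} {E : Type*} [NormedAddCommGroup E] [NormedSpace ℝ E]

theorem Dchain_nil (H : (Fin k → ℝ) → E) : Dchain [] H = H := rfl

theorem Dchain_cons (m : Fin k) (L : List (Fin k)) (H : (Fin k → ℝ) → E) :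
    Dchain (m :: L) H = fun t => fderiv ℝ (Dchain L H) t (Pi.single m 1) := rfl

theorem Dchain_append (L₁ L₂ : List (Fin k)) (H : (Fin k → ℝ) → E) :
    Dchain (L₁ ++ L₂) H = Dchain L₁ (Dchain L₂ H) := by
  simp [Dchain, List.foldr_append]

theorem Dchain_analytic [CompleteSpace E] {U : Set (Fin k → ℝ)} {H : (Fin k → ℝ) → E}
    (hH : AnalyticOnNhd ℝ H U) (M : List (Fin k)) :
    AnalyticOnNhd ℝ (Dchain M H) U := by
  induction M with
  | nil => exact hH
  | cons m L ih =>
    rw [Dchain_cons]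
    exact (ContinuousLinearMap.apply ℝ E (Pi.single m 1)).comp_analyticOnNhd ih.fderiv

theorem Dchain_const (c : E) (M : List (Fin k)) :
    Dchain M (fun _ => c) = fun _ => if M = [] then c else (0 : E) := by
  induction M with
  | nil => simp [Dchain_nil]
  | cons m L ih =>
    funext t
    rw [Dchain_cons, ih]
    by_cases h : L = [] <;> simp [h]

theorem Dchain_clm [CompleteSpace E] {F : Type*} [NormedAddCommGroup F] [NormedSpace ℝ F]
    (T : E →L[ℝ] F) {U : Set (Fin k → ℝ)} (hU : IsOpen U) {H : (Fin k → ℝ) → E}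
    (hH : AnalyticOnNhd ℝ H U) (M : List (Fin k)) :
    ∀ t ∈ U, Dchain M (fun s => T (H s)) t = T (Dchain M H t) := by
  induction M with
  | nil => intro t _; rfl
  | cons m L ih =>
    intro t ht
    have hdiff : DifferentiableAt ℝ (Dchain L H) t :=
      ((Dchain_analytic hH L) t ht).differentiableAt
    have h1 : Dchain L (fun s => T (H s)) =ᶠ[𝓝 t] fun s => T (Dchain L H s) :=
      Filter.eventuallyEq_of_mem (hU.mem_nhds ht) (fun s hs => ih s hs)
    simp only [Dchain_cons]
    rw [h1.fderiv_eq,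
      show (fun s => T (Dchain L H s)) = T ∘ Dchain L H from rfl,
      fderiv_comp t T.differentiableAt hdiff]
    simp

theorem Dchain_sum {ι : Type*} (s : Finset ι) (c : ι → ℝ) (g : ι → (Fin k → ℝ) → ℝ)
    {U : Set (Fin k → ℝ)} (hU : IsOpen U) (hg : ∀ j ∈ s, AnalyticOnNhd ℝ (g j) U)
    (M : List (Fin k)) :
    ∀ t ∈ U, Dchain M (fun t => ∑ j ∈ s, c j * g j t) t = ∑ j ∈ s, c j * Dchain M (g j) t := by
  induction M with
  | nil => intro t _; rfl
  | cons m L ih =>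
    intro t ht
    have hdiff : ∀ j ∈ s, DifferentiableAt ℝ (Dchain L (g j)) t := fun j hj =>
      ((Dchain_analytic (hg j hj) L) t ht).differentiableAt
    have h1 : Dchain L (fun t => ∑ j ∈ s, c j * g j t)
        =ᶠ[𝓝 t] fun t => ∑ j ∈ s, c j * Dchain L (g j) t :=
      Filter.eventuallyEq_of_mem (hU.mem_nhds ht) (fun u hu => ih u hu)
    simp only [Dchain_cons]
    rw [h1.fderiv_eq,
      fderiv_fun_sum (fun j hj => ((hdiff j hj).const_mul (c j)))]
    rw [ContinuousLinearMap.sum_apply]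
    refine Finset.sum_congr rfl fun j hj => ?_
    rw [fderiv_const_mul (hdiff j hj), ContinuousLinearMap.smul_apply, smul_eq_mul]

theorem iteratedFDeriv_eq_Dchain {U : Set (Fin k → ℝ)} (hU : IsOpen U)
    {H : (Fin k → ℝ) → ℝ} (hH : AnalyticOnNhd ℝ H U) :
    ∀ (s : ℕ) (v : Fin s → Fin k), ∀ t ∈ U,
      iteratedFDeriv ℝ s H t (fun i => Pi.single (v i) 1)
        = Dchain (List.ofFn v) H t := by
  intro s
  induction s with
  | zero => intro v t ht; simp [iteratedFDeriv_zero_apply, Dchain]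
  | succ s ih =>
    intro v t ht
    have hit : AnalyticOnNhd ℝ (iteratedFDeriv ℝ s H) U := hH.iteratedFDeriv s
    have hdiff : DifferentiableAt ℝ (iteratedFDeriv ℝ s H) t := (hit t ht).differentiableAt
    have h1 : (fun u => iteratedFDeriv ℝ s H u (fun i => Pi.single (v i.succ) 1))
        =ᶠ[𝓝 t] Dchain (List.ofFn (fun i => v i.succ)) H :=
      Filter.eventuallyEq_of_mem (hU.mem_nhds ht) (fun u hu => ih _ u hu)
    rw [iteratedFDeriv_succ_apply_left, List.ofFn_succ]
    simp only [Dchain_cons]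
    rw [← h1.fderiv_eq, ← fderiv_continuousMultilinear_apply_const_apply hdiff]
    rfl

theorem eventually_zero_of_Dchain_zero {U : Set (Fin k → ℝ)} (hU : IsOpen U)
    {a : Fin k → ℝ} (ha : a ∈ U) {H : (Fin k → ℝ) → ℝ} (hH : AnalyticOnNhd ℝ H U)
    (h0 : ∀ M : List (Fin k), Dchain M H a = 0) : ∀ᶠ t in 𝓝 a, H t = 0 := by
  obtain ⟨p, r, hpr⟩ := hH a ha
  have hbasis : ∀ (s : ℕ) (v : Fin s → Fin k),
      iteratedFDeriv ℝ s H a (fun i => Pi.single (v i) 1) = 0 := by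
    intro s v
    rw [iteratedFDeriv_eq_Dchain hU hH s v a ha, h0]
  have hdiag : ∀ (s : ℕ) (y : Fin k → ℝ), iteratedFDeriv ℝ s H a (fun _ => y) = 0 := by
    intro s y
    have hy : y = ∑ m : Fin k, y m • (Pi.single m 1 : Fin k → ℝ) := by
      funext i
      simp [Finset.sum_apply, Pi.single_apply]
    have hms := (iteratedFDeriv ℝ s H a).toMultilinearMap.map_sum
      (g := fun (_i : Fin s) (m : Fin k) => y m • (Pi.single m 1 : Fin k → ℝ))
    simp only [ContinuousMultilinearMap.coe_coe] at hms
    calc iteratedFDeriv ℝ s H a (fun _ => y)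
        = iteratedFDeriv ℝ s H a
            (fun _ => ∑ m : Fin k, y m • (Pi.single m 1 : Fin k → ℝ)) := by rw [← hy]
      _ = ∑ v : Fin s → Fin k, iteratedFDeriv ℝ s H a
            (fun i => y (v i) • (Pi.single (v i) 1 : Fin k → ℝ)) := hms
      _ = 0 := by
          refine Finset.sum_eq_zero fun v _ => ?_
          have hsm := (iteratedFDeriv ℝ s H a).toMultilinearMap.map_smul_univ
            (fun i => y (v i)) (fun i => (Pi.single (v i) 1 : Fin k → ℝ))
          simp only [ContinuousMultilinearMap.coe_coe] at hsm
          rw [hsm, hbasis, smul_zero]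
  have hmem : Metric.eball a r ∈ 𝓝 a := Metric.eball_mem_nhds a hpr.r_pos
  filter_upwards [hmem] with t ht
  have hy : (t - a) ∈ Metric.eball (0 : Fin k → ℝ) r := by
    rw [Metric.mem_eball] at ht ⊢
    simpa [edist_eq_enorm_sub] using ht
  have hsum := hpr.hasSum_iteratedFDeriv hy
  rw [add_sub_cancel] at hsum
  have h0' : (fun n => (n.factorial : ℝ)⁻¹ • iteratedFDeriv ℝ n H a fun _ => t - a)
      = fun _ => (0 : ℝ) := by
    funext n; rw [hdiag]; simp
  rw [h0'] at hsum
  exact hsum.unique hasSum_zero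

/-- The `t`-dependent first component of `xiField`. -/
noncomputable def gFun (n k : ℕ) (hkn : k ≤ n) (f : Fin n → (Fin k → ℝ) → ℝ) (ℓ : Fin k) :
    (Fin k → ℝ) → (Fin n → ℝ) :=
  fun t => -(Pi.single (Fin.castLE hkn ℓ) 1) +
    ∑ j ∈ Finset.univ.filter (fun j : Fin n => k ≤ (j : ℕ)),
      (fderiv ℝ (f j) t (Pi.single ℓ 1)) • (Pi.single j (1 : ℝ) : Fin n → ℝ)

theorem gFun_analytic {n : ℕ} (hkn : k ≤ n) {f : Fin n → (Fin k → ℝ) → ℝ}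
    {U : Set (Fin k → ℝ)}
    (hf : ∀ j : Fin n, k ≤ (j : ℕ) → AnalyticOnNhd ℝ (f j) U) (ℓ : Fin k) :
    AnalyticOnNhd ℝ (gFun n k hkn f ℓ) U := by
  refine AnalyticOnNhd.add analyticOnNhd_const ?_
  refine Finset.analyticOnNhd_fun_sum _ fun j hj => ?_
  have hj' : k ≤ (j : ℕ) := (Finset.mem_filter.1 hj).2
  have h1 : AnalyticOnNhd ℝ (fun t => fderiv ℝ (f j) t (Pi.single ℓ 1)) U := by
    have := (ContinuousLinearMap.apply ℝ ℝ
      (Pi.single ℓ 1 : Fin k → ℝ)).comp_analyticOnNhd (hf j hj').fderiv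
    simpa [Function.comp_def] using this
  have := (ContinuousLinearMap.toSpanSingleton ℝ
    (Pi.single j (1 : ℝ) : Fin n → ℝ)).comp_analyticOnNhd h1
  simpa [Function.comp_def, ContinuousLinearMap.toSpanSingleton_apply] using this

theorem gFun_comp_ge {n : ℕ} (hkn : k ≤ n) (f : Fin n → (Fin k → ℝ) → ℝ) (ℓ : Fin k)
    (j : Fin n) (hj : k ≤ (j : ℕ)) :
    (fun t => gFun n k hkn f ℓ t j) = Dchain [ℓ] (f j) := by
  funext t
  have hne : j ≠ Fin.castLE hkn ℓ := by
    intro h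
    have h1 : (j : ℕ) = (ℓ : ℕ) := by rw [h]; simp
    have h2 := ℓ.isLt
    omega
  simp only [gFun, Pi.add_apply, Pi.neg_apply, Finset.sum_apply, Pi.smul_apply, smul_eq_mul]
  rw [Pi.single_eq_of_ne hne, neg_zero, zero_add]
  rw [Finset.sum_eq_single j]
  · rw [Pi.single_eq_same, mul_one]; rfl
  · intro b _ hb
    rw [Pi.single_eq_of_ne (Ne.symm hb), mul_zero]
  · intro hj'
    exact absurd (Finset.mem_filter.2 ⟨Finset.mem_univ j, hj⟩) hj'

theorem gFun_comp_lt {n : ℕ} (hkn : k ≤ n) (f : Fin n → (Fin k → ℝ) → ℝ) (ℓ : Fin k)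
    (j : Fin n) (hj : (j : ℕ) < k) :
    (fun t => gFun n k hkn f ℓ t j) = fun _ => -((Pi.single (Fin.castLE hkn ℓ) 1 : Fin n → ℝ) j) := by
  funext t
  simp only [gFun, Pi.add_apply, Pi.neg_apply, Finset.sum_apply, Pi.smul_apply, smul_eq_mul]
  rw [Finset.sum_eq_zero, add_zero]
  intro b hb
  have hb' : k ≤ (b : ℕ) := (Finset.mem_filter.1 hb).2
  have : j ≠ b := by intro h; rw [h] at hj; omega
  rw [Pi.single_eq_of_ne this, mul_zero]

theorem xiField_eq (n k : ℕ) (hkn : k ≤ n) (f : Fin n → (Fin k → ℝ) → ℝ) (ℓ : Fin k) :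
    xiField n k hkn f ℓ = fun p => (gFun n k hkn f ℓ p.2, (0 : Fin k → ℝ)) := rfl

theorem iterBracket_eq {n : ℕ} (hkn : k ≤ n) (f : Fin n → (Fin k → ℝ) → ℝ)
    {U : Set (Fin k → ℝ)} (hU : IsOpen U)
    (hg : ∀ ℓ : Fin k, AnalyticOnNhd ℝ (gFun n k hkn f ℓ) U) (L : List (Fin k)) (ℓ : Fin k) :
    ∀ p : (Fin n → ℝ) × (Fin k → ℝ), p.2 ∈ U →
      iterBracket n k hkn f L ℓ p = (Dchain L (gFun n k hkn f ℓ) p.2, 0) := by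
  induction L with
  | nil => intro p _; rfl
  | cons m L ih =>
    intro p hp
    show VBracket (etaField n k m) (iterBracket n k hkn f L ℓ) p = _
    unfold VBracket
    have heta : fderiv ℝ (etaField n k m) p = 0 :=
      fderiv_const_apply ((0 : Fin n → ℝ), (Pi.single m 1 : Fin k → ℝ))
    have hopen : IsOpen {q : (Fin n → ℝ) × (Fin k → ℝ) | q.2 ∈ U} :=
      hU.preimage continuous_snd
    have h1 : iterBracket n k hkn f L ℓ
        =ᶠ[𝓝 p] fun q => (Dchain L (gFun n k hkn f ℓ) q.2, (0 : Fin k → ℝ)) :=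
      Filter.eventuallyEq_of_mem (hopen.mem_nhds hp) (fun q hq => ih q hq)
    have hdiff : DifferentiableAt ℝ (Dchain L (gFun n k hkn f ℓ)) p.2 :=
      ((Dchain_analytic (hg ℓ) L) p.2 hp).differentiableAt
    have hF : HasFDerivAt
        (fun q : (Fin n → ℝ) × (Fin k → ℝ) => (Dchain L (gFun n k hkn f ℓ) q.2, (0 : Fin k → ℝ)))
        (((fderiv ℝ (Dchain L (gFun n k hkn f ℓ)) p.2).comp
          (ContinuousLinearMap.snd ℝ (Fin n → ℝ) (Fin k → ℝ))).prod 0) p :=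
      (HasFDerivAt.prodMk (hdiff.hasFDerivAt.comp p hasFDerivAt_snd) (hasFDerivAt_const 0 p))
    rw [h1.fderiv_eq, hF.fderiv, heta]
    simp only [etaField, ContinuousLinearMap.prod_apply, ContinuousLinearMap.comp_apply,
      ContinuousLinearMap.coe_snd', ContinuousLinearMap.zero_apply, Dchain_cons, sub_zero]

/-- Assume moreover that the `f_j` are real-analytic on `U`,
vanish to second order at `a ∈ U`, and have linearly independent germs at `a`
(no nontrivial real linear combination vanishes on a neighbourhood of `a`).
Then for every `x ∈ ℝⁿ` the values at `(x,a)` of the fields `η^m`, `ξ^ℓ`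
together with the values of all iterated brackets span all of `ℝⁿ × ℝᵏ`. -/
theorem stmt_3 {n k : ℕ} (hk : 1 ≤ k) (hkn : k < n)
    (U : Set (Fin k → ℝ)) (hU : IsOpen U) (a : Fin k → ℝ) (haU : a ∈ U)
    (f : Fin n → (Fin k → ℝ) → ℝ)
    (hf : ∀ j : Fin n, k ≤ (j : ℕ) → AnalyticOnNhd ℝ (f j) U)
    (hf0 : ∀ j : Fin n, k ≤ (j : ℕ) → f j a = 0)
    (hdf0 : ∀ j : Fin n, k ≤ (j : ℕ) → fderiv ℝ (f j) a = 0)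
    (hindep : ∀ c : Fin n → ℝ,
      (∀ᶠ t in nhds a,
        (∑ j ∈ Finset.univ.filter (fun j : Fin n => k ≤ (j : ℕ)), c j * f j t) = 0) →
      ∀ j : Fin n, k ≤ (j : ℕ) → c j = 0)
    (x : Fin n → ℝ) :
    Submodule.span ℝ
      ({v | ∃ m : Fin k, v = etaField n k m (x, a)} ∪
       {v | ∃ ℓ : Fin k, v = xiField n k hkn.le f ℓ (x, a)} ∪
       {v | ∃ L : List (Fin k), L ≠ [] ∧
          ∃ ℓ : Fin k, v = iterBracket n k hkn.le f L ℓ (x, a)}) = ⊤ := by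
  classical
  by_contra hne
  set S : Set ((Fin n → ℝ) × (Fin k → ℝ)) :=
    ({v | ∃ m : Fin k, v = etaField n k m (x, a)} ∪
     {v | ∃ ℓ : Fin k, v = xiField n k hkn.le f ℓ (x, a)} ∪
     {v | ∃ L : List (Fin k), L ≠ [] ∧
        ∃ ℓ : Fin k, v = iterBracket n k hkn.le f L ℓ (x, a)}) with hS
  have hlt : Submodule.span ℝ S < ⊤ := lt_top_iff_ne_top.2 hne
  obtain ⟨φ, hφ0, hφmap⟩ :=
    Submodule.exists_dual_map_eq_bot_of_lt_top hlt inferInstance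
  have hvan : ∀ v ∈ S, φ v = 0 := by
    intro v hv
    have h1 : φ v ∈ (Submodule.span ℝ S).map φ :=
      Submodule.mem_map_of_mem (Submodule.subset_span hv)
    rw [hφmap] at h1
    simpa using h1
  have hg : ∀ ℓ : Fin k, AnalyticOnNhd ℝ (gFun n k hkn.le f ℓ) U :=
    fun ℓ => gFun_analytic hkn.le hf ℓ
  set c : Fin n → ℝ := fun j => φ ((Pi.single j 1 : Fin n → ℝ), 0) with hc
  set d : Fin k → ℝ := fun m => φ (0, (Pi.single m 1 : Fin k → ℝ)) with hd
  -- η generators kill d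
  have hdzero : ∀ m : Fin k, d m = 0 := by
    intro m
    exact hvan _ (Set.mem_union_left _ (Set.mem_union_left _ ⟨m, rfl⟩))
  -- ξ generators kill c j for j < k
  have hgA : ∀ ℓ : Fin k, gFun n k hkn.le f ℓ a
      = -(Pi.single (Fin.castLE hkn.le ℓ) 1 : Fin n → ℝ) := by
    intro ℓ
    have : ∑ j ∈ Finset.univ.filter (fun j : Fin n => k ≤ (j : ℕ)),
        (fderiv ℝ (f j) a (Pi.single ℓ 1)) • (Pi.single j (1 : ℝ) : Fin n → ℝ) = 0 := by
      refine Finset.sum_eq_zero fun j hj => ?_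
      rw [hdf0 j (Finset.mem_filter.1 hj).2]
      simp
    rw [gFun, this, add_zero]
  have hclt : ∀ j : Fin n, (j : ℕ) < k → c j = 0 := by
    intro j hj
    have hmem : xiField n k hkn.le f ⟨(j : ℕ), hj⟩ (x, a) ∈ S :=
      Set.mem_union_left _ (Set.mem_union_right _ ⟨⟨(j : ℕ), hj⟩, rfl⟩)
    have h1 := hvan _ hmem
    rw [xiField_eq] at h1
    simp only [hgA] at h1
    have hcast : Fin.castLE hkn.le (⟨(j : ℕ), hj⟩ : Fin k) = j := by
      apply Fin.ext; simp
    rw [hcast] at h1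
    have h2 : ((-(Pi.single j 1 : Fin n → ℝ), (0 : Fin k → ℝ))
        : (Fin n → ℝ) × (Fin k → ℝ))
        = -((Pi.single j 1 : Fin n → ℝ), (0 : Fin k → ℝ)) := by
      apply Prod.ext <;> simp
    rw [h2, map_neg, neg_eq_zero] at h1
    exact h1
  -- representation of φ on first components
  have hφ1 : ∀ v : Fin n → ℝ, φ (v, 0) = ∑ j : Fin n, v j * c j := by
    intro v
    have hrep : ((v, 0) : (Fin n → ℝ) × (Fin k → ℝ))
        = ∑ j : Fin n, v j • ((Pi.single j 1 : Fin n → ℝ), (0 : Fin k → ℝ)) := by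
      apply Prod.ext
      · rw [Prod.fst_sum]
        have he : ∀ j : Fin n, (v j • ((Pi.single j 1 : Fin n → ℝ), (0 : Fin k → ℝ))).1
            = Pi.single j (v j) := fun j => by
          rw [show (v j • ((Pi.single j 1 : Fin n → ℝ), (0 : Fin k → ℝ))).1
              = v j • (Pi.single j 1 : Fin n → ℝ) from rfl,
            ← Pi.single_smul, smul_eq_mul, mul_one]
        rw [Finset.sum_congr rfl fun j _ => he j, Finset.univ_sum_single]
      · rw [Prod.snd_sum]; simp
    rw [hrep, map_sum]
    refine Finset.sum_congr rfl fun j _ => ?_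
    rw [← smul_eq_mul, ← map_smul]
  -- bracket generators
  have hbr : ∀ L : List (Fin k), L ≠ [] → ∀ ℓ : Fin k,
      ∑ j ∈ Finset.univ.filter (fun j : Fin n => k ≤ (j : ℕ)),
        c j * Dchain (L ++ [ℓ]) (f j) a = 0 := by
    intro L hL ℓ
    have hmem : iterBracket n k hkn.le f L ℓ (x, a) ∈ S :=
      Set.mem_union_right _ ⟨L, hL, ℓ, rfl⟩
    have h1 := hvan _ hmem
    rw [iterBracket_eq hkn.le f hU hg L ℓ (x, a) haU] at h1
    rw [hφ1] at h1
    have hcomp : ∀ j : Fin n, (Dchain L (gFun n k hkn.le f ℓ) a) j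
        = Dchain L (fun t => gFun n k hkn.le f ℓ t j) a :=
      fun j => (Dchain_clm (ContinuousLinearMap.proj j) hU (hg ℓ) L a haU).symm
    have h2 : ∀ j : Fin n, (j : ℕ) < k → (Dchain L (gFun n k hkn.le f ℓ) a) j = 0 := by
      intro j hj
      rw [hcomp j, gFun_comp_lt hkn.le f ℓ j hj, Dchain_const, if_neg hL]
    have h3 : ∀ j : Fin n, k ≤ (j : ℕ) → (Dchain L (gFun n k hkn.le f ℓ) a) j
        = Dchain (L ++ [ℓ]) (f j) a := by
      intro j hj
      rw [hcomp j, gFun_comp_ge hkn.le f ℓ j hj, ← Dchain_append]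
    rw [← Finset.sum_filter_add_sum_filter_not Finset.univ
      (fun j : Fin n => k ≤ (j : ℕ))] at h1
    have h4 : ∑ j ∈ Finset.univ.filter (fun j : Fin n => ¬ k ≤ (j : ℕ)),
        (Dchain L (gFun n k hkn.le f ℓ) a) j * c j = 0 := by
      refine Finset.sum_eq_zero fun j hj => ?_
      rw [h2 j (Nat.not_le.mp (Finset.mem_filter.1 hj).2), zero_mul]
    rw [h4, add_zero] at h1
    rw [← h1]
    refine Finset.sum_congr rfl fun j hj => ?_
    rw [h3 j (Finset.mem_filter.1 hj).2, mul_comm]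
  -- the linear combination h
  set h : (Fin k → ℝ) → ℝ :=
    fun t => ∑ j ∈ Finset.univ.filter (fun j : Fin n => k ≤ (j : ℕ)), c j * f j t with hh
  have hhan : AnalyticOnNhd ℝ h U :=
    Finset.analyticOnNhd_fun_sum _ fun j hj =>
      analyticOnNhd_const.mul (hf j (Finset.mem_filter.1 hj).2)
  have hDzero : ∀ M : List (Fin k), Dchain M h a = 0 := by
    intro M
    rw [hh]
    rw [Dchain_sum _ c f hU (fun j hj => hf j (Finset.mem_filter.1 hj).2) M a haU]
    rcases M.eq_nil_or_concat' with rfl | ⟨L, ℓ, rfl⟩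
    · refine Finset.sum_eq_zero fun j hj => ?_
      rw [Dchain_nil, hf0 j (Finset.mem_filter.1 hj).2, mul_zero]
    · rcases eq_or_ne L [] with rfl | hL
      · refine Finset.sum_eq_zero fun j hj => ?_
        have : Dchain ([] ++ [ℓ]) (f j) a = fderiv ℝ (f j) a (Pi.single ℓ 1) := rfl
        rw [this, hdf0 j (Finset.mem_filter.1 hj).2]
        simp
      · exact hbr L hL ℓ
  have hev : ∀ᶠ t in 𝓝 a, h t = 0 :=
    eventually_zero_of_Dchain_zero hU haU hhan hDzero
  have hcge : ∀ j : Fin n, k ≤ (j : ℕ) → c j = 0 := hindep c hev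
  -- conclude φ = 0
  apply hφ0
  apply LinearMap.ext
  intro z
  have hz : z = ((z.1, 0) : (Fin n → ℝ) × (Fin k → ℝ)) + (0, z.2) := by
    apply Prod.ext <;> simp
  rw [hz, map_add]
  have e1 : φ (z.1, 0) = 0 := by
    rw [hφ1]
    refine Finset.sum_eq_zero fun j _ => ?_
    rcases lt_or_ge (j : ℕ) k with hj | hj
    · rw [hclt j hj, mul_zero]
    · rw [hcge j hj, mul_zero]
  have e2 : φ (0, z.2) = 0 := by
    have hrep : ((0, z.2) : (Fin n → ℝ) × (Fin k → ℝ))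
        = ∑ m : Fin k, z.2 m • ((0 : Fin n → ℝ), (Pi.single m 1 : Fin k → ℝ)) := by
      apply Prod.ext
      · rw [Prod.fst_sum]; simp
      · rw [Prod.snd_sum]
        have he : ∀ m : Fin k, (z.2 m • ((0 : Fin n → ℝ), (Pi.single m 1 : Fin k → ℝ))).2
            = Pi.single m (z.2 m) := fun m => by
          rw [show (z.2 m • ((0 : Fin n → ℝ), (Pi.single m 1 : Fin k → ℝ))).2
              = z.2 m • (Pi.single m 1 : Fin k → ℝ) from rfl,
            ← Pi.single_smul, smul_eq_mul, mul_one]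
        rw [Finset.sum_congr rfl fun m _ => he m, Finset.univ_sum_single]
    rw [hrep, map_sum]
    refine Finset.sum_eq_zero fun m _ => ?_
    rw [map_smul, show φ (0, Pi.single m 1) = d m from rfl, hdzero, smul_zero]
  rw [e1, e2, add_zero]
  simp
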